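/- Let m ≥ 1, ℂ^{2m} = ℂ^m ⊕ ℂ^m, Q an orthogonal projection on ℂ^{2m}, and M_sy, M_asy the symmetric and antisymmetric diagonal subspaces. Then dim((ker Q)^⊥ ∩ M_asy) + dim(ker Q ∩ M_asy) = dim((ker Q)^⊥ ∩ M_sy) + dim(ker Q ∩ M_sy). -/

import Mathlib

open Matrix

/-- The linear embedding c ↦ (c,c). -/
def symMap (m : ℕ) : (Fin m → ℂ) →ₗ[ℂ] (Fin m ⊕ Fin m → ℂ) where
  toFun c := Sum.elim c c
  map_add' x y := by funext i; cases i <;> simp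
  map_smul' r x := by funext i; cases i <;> simp

/-- The linear embedding c ↦ (c,−c). -/
def asymMap (m : ℕ) : (Fin m → ℂ) →ₗ[ℂ] (Fin m ⊕ Fin m → ℂ) where
  toFun c := Sum.elim c (-c)
  map_add' x y := by funext i; cases i <;> simp [add_comm]
  map_smul' r x := by funext i; cases i <;> simp

/-- The symmetric subspace M_sy = {(c,c)}. -/
noncomputable def Msy (m : ℕ) : Submodule ℂ (Fin m ⊕ Fin m → ℂ) := LinearMap.range (symMap m)

/-- The antisymmetric subspace M_asy = {(c,−c)}. -/
noncomputable def Masy (m : ℕ) : Submodule ℂ (Fin m ⊕ Fin m → ℂ) := LinearMap.range (asymMap m)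

open Module

/-- Key abstract lemma. -/
lemma key_lemma {E : Type*} [NormedAddCommGroup E] [InnerProductSpace ℂ E]
    [FiniteDimensional ℂ E] (R S : Submodule ℂ E)
    (hS : finrank ℂ S = finrank ℂ Sᗮ) :
    finrank ℂ ↥(R ⊓ Sᗮ) + finrank ℂ ↥(Rᗮ ⊓ Sᗮ) =
      finrank ℂ ↥(R ⊓ S) + finrank ℂ ↥(Rᗮ ⊓ S) := by
  have hN := Submodule.finrank_add_finrank_orthogonal (K := R)
  have hNS := Submodule.finrank_add_finrank_orthogonal (K := S)
  -- Rᗮ ⊓ Sᗮ = (R ⊔ S)ᗮ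
  have h1 : finrank ℂ ↥(Rᗮ ⊓ Sᗮ) + finrank ℂ ↥(R ⊔ S) = finrank ℂ E := by
    rw [Submodule.inf_orthogonal]
    rw [add_comm]
    exact Submodule.finrank_add_finrank_orthogonal _
  have h2 : finrank ℂ ↥(R ⊓ Sᗮ) + finrank ℂ ↥(Rᗮ ⊔ S) = finrank ℂ E := by
    have : R ⊓ Sᗮ = (Rᗮ ⊔ S)ᗮ := by
      rw [← Submodule.inf_orthogonal, Submodule.orthogonal_orthogonal]
    rw [this, add_comm]
    exact Submodule.finrank_add_finrank_orthogonal _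
  have g1 := Submodule.finrank_sup_add_finrank_inf_eq R S
  have g2 := Submodule.finrank_sup_add_finrank_inf_eq Rᗮ S
  omega

theorem stmt6 {m : ℕ} (hm : 0 < m) (Q : Matrix (Fin m ⊕ Fin m) (Fin m ⊕ Fin m) ℂ)
    (hQ : Qᴴ = Q) (hQ2 : Q * Q = Q) :
    Module.finrank ℂ ↥(LinearMap.range Q.mulVecLin ⊓ Masy m) +
      Module.finrank ℂ ↥(LinearMap.ker Q.mulVecLin ⊓ Masy m) =
    Module.finrank ℂ ↥(LinearMap.range Q.mulVecLin ⊓ Msy m) +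
      Module.finrank ℂ ↥(LinearMap.ker Q.mulVecLin ⊓ Msy m) := by
  classical
  have hι : True := trivial
  let e : ((Fin m ⊕ Fin m) → ℂ) ≃ₗ[ℂ] EuclideanSpace ℂ (Fin m ⊕ Fin m) := (WithLp.linearEquiv 2 ℂ ((Fin m ⊕ Fin m) → ℂ)).symm
  let T : EuclideanSpace ℂ (Fin m ⊕ Fin m) →ₗ[ℂ] EuclideanSpace ℂ (Fin m ⊕ Fin m) := Matrix.toEuclideanLin Q
  -- transfer the submodules
  have hmap_range : (LinearMap.range Q.mulVecLin).map e.toLinearMap = LinearMap.range T := by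
    ext x
    simp only [Submodule.mem_map, LinearMap.mem_range]
    constructor
    · rintro ⟨y, ⟨c, rfl⟩, rfl⟩
      exact ⟨e c, rfl⟩
    · rintro ⟨c, rfl⟩
      exact ⟨Q.mulVecLin (e.symm c), ⟨e.symm c, rfl⟩, rfl⟩
  have hmap_ker : (LinearMap.ker Q.mulVecLin).map e.toLinearMap = LinearMap.ker T := by
    ext x
    simp only [Submodule.mem_map, LinearMap.mem_ker]
    constructor
    · rintro ⟨y, hy, rfl⟩
      show e (Q.mulVecLin y) = 0
      rw [hy]; simp
    · intro hx
      refine ⟨e.symm x, ?_, by simp⟩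
      have : e (Q.mulVecLin (e.symm x)) = 0 := hx
      simpa using congrArg e.symm this
  -- T is self-adjoint
  have hTadj : LinearMap.adjoint T = T := by
    rw [← Matrix.toEuclideanLin_conjTranspose_eq_adjoint, hQ]
  have hTT : ∀ x, T (T x) = T x := by
    intro x
    show Matrix.toEuclideanLin Q (Matrix.toEuclideanLin Q x) = Matrix.toEuclideanLin Q x
    simp only [Matrix.toEuclideanLin_apply]
    rw [Matrix.mulVec_mulVec, hQ2]
  -- ker T = (range T)ᗮ
  have hker : LinearMap.ker T = (LinearMap.range T)ᗮ := by
    ext x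
    rw [LinearMap.mem_ker, Submodule.mem_orthogonal]
    constructor
    · rintro hx u ⟨y, rfl⟩
      rw [← hTadj, LinearMap.adjoint_inner_left, hx, inner_zero_right]
    · intro h
      have h1 : (inner ℂ (T x) (T x) : ℂ) = 0 := by
        calc (inner ℂ (T x) (T x) : ℂ)
            = inner ℂ (LinearMap.adjoint T (T x)) x := by rw [LinearMap.adjoint_inner_left]
          _ = inner ℂ (T (T x)) x := by rw [hTadj]
          _ = inner ℂ (T x) x := by rw [hTT]
          _ = 0 := h _ ⟨x, rfl⟩
      exact inner_self_eq_zero.mp h1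
  -- the symmetric and antisymmetric subspaces in EuclideanSpace
  set S : Submodule ℂ (EuclideanSpace ℂ (Fin m ⊕ Fin m)) := (Msy m).map e.toLinearMap with hSdef
  set A : Submodule ℂ (EuclideanSpace ℂ (Fin m ⊕ Fin m)) := (Masy m).map e.toLinearMap with hAdef
  have hSrank : finrank ℂ S = m := by
    rw [hSdef, LinearEquiv.finrank_map_eq e]
    show finrank ℂ (LinearMap.range (symMap m)) = m
    rw [LinearMap.finrank_range_of_inj, Module.finrank_pi]
    · simp
    · intro a b hab
      funext i
      exact congrFun hab (Sum.inl i)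
  have hArank : finrank ℂ A = m := by
    rw [hAdef, LinearEquiv.finrank_map_eq e]
    show finrank ℂ (LinearMap.range (asymMap m)) = m
    rw [LinearMap.finrank_range_of_inj, Module.finrank_pi]
    · simp
    · intro a b hab
      funext i
      exact congrFun hab (Sum.inl i)
  have hEdim : finrank ℂ (EuclideanSpace ℂ (Fin m ⊕ Fin m)) = m + m := by
    simp
  -- A = Sᗮ
  have hAS : A = Sᗮ := by
    have hle : A ≤ Sᗮ := by
      rintro x ⟨y, ⟨c, rfl⟩, rfl⟩
      rw [Submodule.mem_orthogonal]
      rintro u ⟨v, ⟨d, rfl⟩, rfl⟩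
      show (inner ℂ (e (symMap m d)) (e (asymMap m c)) : ℂ) = 0
      show dotProduct (Sum.elim c (-c)) (star (Sum.elim d d)) = 0
      rw [dotProduct]
      rw [Fintype.sum_sum_type]
      simp [mul_comm]
    refine Submodule.eq_of_le_of_finrank_eq hle ?_
    have h1 := Submodule.finrank_add_finrank_orthogonal (K := S)
    rw [hArank]
    omega
  have hkey := key_lemma (LinearMap.range T) S (by
    have h1 := Submodule.finrank_add_finrank_orthogonal (K := S)
    rw [hSrank] at h1 ⊢
    omega)
  -- transfer finranks
  have einj : Function.Injective e.toLinearMap := e.injective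
  have t1 : LinearMap.range Q.mulVecLin ⊓ Masy m =
      ((LinearMap.range T ⊓ A).comap e.toLinearMap : Submodule ℂ ((Fin m ⊕ Fin m) → ℂ)) := by
    rw [← hmap_range, hAdef, ← Submodule.map_inf _ einj,
      Submodule.comap_map_eq_of_injective einj]
  have t2 : LinearMap.ker Q.mulVecLin ⊓ Masy m =
      ((LinearMap.ker T ⊓ A).comap e.toLinearMap : Submodule ℂ ((Fin m ⊕ Fin m) → ℂ)) := by
    rw [← hmap_ker, hAdef, ← Submodule.map_inf _ einj,
      Submodule.comap_map_eq_of_injective einj]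
  have t3 : LinearMap.range Q.mulVecLin ⊓ Msy m =
      ((LinearMap.range T ⊓ S).comap e.toLinearMap : Submodule ℂ ((Fin m ⊕ Fin m) → ℂ)) := by
    rw [← hmap_range, hSdef, ← Submodule.map_inf _ einj,
      Submodule.comap_map_eq_of_injective einj]
  have t4 : LinearMap.ker Q.mulVecLin ⊓ Msy m =
      ((LinearMap.ker T ⊓ S).comap e.toLinearMap : Submodule ℂ ((Fin m ⊕ Fin m) → ℂ)) := by
    rw [← hmap_ker, hSdef, ← Submodule.map_inf _ einj,
      Submodule.comap_map_eq_of_injective einj]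
  have fr : ∀ (p : Submodule ℂ (EuclideanSpace ℂ (Fin m ⊕ Fin m))),
      finrank ℂ (p.comap e.toLinearMap) = finrank ℂ p := by
    intro p
    rw [show (p.comap e.toLinearMap) = p.map e.symm.toLinearMap by
      rw [Submodule.map_equiv_eq_comap_symm]; simp]
    exact LinearEquiv.finrank_map_eq e.symm p
  rw [t1, t2, t3, t4, fr, fr, fr, fr, hker, hAS]
  exact hkey
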